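/- Let R(τ, z) = ∑_{r ∈ Z + 1/2} ( sgn(r) - E(√(2y)·(r + v/y)) ) · (-1)^{r - 1/2} q^{-r²/2} ζ^{-r}, where E(x) = 2∫₀ˣ e^{-πt²}dt is the error-function and τ = x + iy ∈ H, z = u + iv ∈ C. Then the series converges absolutely for all (τ, z) ∈ H × C. -/

import Mathlib

open Real MeasureTheory Set Filter Topology intervalIntegral



/-- The error function `E(x) = 2∫₀ˣ e^{-πt²} dt`. -/
noncomputable def errFn (x : ℝ) : ℝ := 2 * ∫ t in (0:ℝ)..x, Real.exp (-Real.pi * t ^ 2)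

lemma gauss_integrable : Integrable (fun t : ℝ => Real.exp (-π * t ^ 2)) :=
  integrable_exp_neg_mul_sq pi_pos

lemma half_gauss : ∫ t in Ioi (0:ℝ), Real.exp (-π * t ^ 2) = 1/2 := by
  rw [integral_gaussian_Ioi, div_self pi_pos.ne', Real.sqrt_one]

lemma errFn_neg (x : ℝ) : errFn (-x) = - errFn x := by
  have h : (∫ t in (0:ℝ)..x, Real.exp (-π * (-t) ^ 2)) = ∫ t in (-x)..(-(0:ℝ)), Real.exp (-π * t ^ 2) :=
    integral_comp_neg (fun t => Real.exp (-π * t ^ 2))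
  simp only [neg_sq, neg_zero] at h
  rw [errFn, errFn, show (∫ t in (0:ℝ)..(-x), Real.exp (-π * t ^ 2))
      = -∫ t in (-x)..(0:ℝ), Real.exp (-π * t ^ 2) from intervalIntegral.integral_symm _ _, ← h]
  ring

lemma errFn_tail {x : ℝ} (hx : 0 ≤ x) :
    1 - errFn x = 2 * ∫ t in Ioi x, Real.exp (-π * t ^ 2) := by
  have hsplit : (∫ t in Ioi (0:ℝ), Real.exp (-π * t ^ 2)) =
      (∫ t in Ioc (0:ℝ) x, Real.exp (-π * t ^ 2)) + ∫ t in Ioi x, Real.exp (-π * t ^ 2) := by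
    rw [← setIntegral_union Ioc_disjoint_Ioi_same measurableSet_Ioi
      gauss_integrable.integrableOn gauss_integrable.integrableOn, Ioc_union_Ioi_eq_Ioi hx]
  rw [errFn, intervalIntegral.integral_of_le hx]
  have := half_gauss
  rw [hsplit] at this
  linarith

lemma errFn_le_one {x : ℝ} (hx : 0 ≤ x) : errFn x ≤ 1 := by
  have h := errFn_tail hx
  have : 0 ≤ ∫ t in Ioi x, Real.exp (-π * t ^ 2) :=
    setIntegral_nonneg measurableSet_Ioi (fun t _ => (Real.exp_pos _).le)
  linarith

lemma errFn_nonneg {x : ℝ} (hx : 0 ≤ x) : 0 ≤ errFn x := by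
  rw [errFn]
  have : 0 ≤ ∫ t in (0:ℝ)..x, Real.exp (-π * t ^ 2) :=
    intervalIntegral.integral_nonneg hx (fun t _ => (Real.exp_pos _).le)
  linarith

lemma abs_errFn_le_one (x : ℝ) : |errFn x| ≤ 1 := by
  rcases le_or_gt 0 x with h | h
  · rw [abs_of_nonneg (errFn_nonneg h)]; exact errFn_le_one h
  · have h' : 0 ≤ -x := by linarith
    have := errFn_neg x
    rw [abs_le]
    constructor <;> nlinarith [errFn_le_one h', errFn_nonneg h']

lemma integral_tail_mul (x : ℝ) :
    ∫ t in Ioi x, t * Real.exp (-π * t ^ 2) = Real.exp (-π * x ^ 2) / (2 * π) := by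
  have hderiv : ∀ t ∈ Ici x, HasDerivAt (fun t : ℝ => -(Real.exp (-π * t ^ 2) / (2 * π)))
      (t * Real.exp (-π * t ^ 2)) t := by
    intro t _
    have h1 : HasDerivAt (fun t : ℝ => -π * t ^ 2) (-π * (2 * t ^ 1)) t :=
      (hasDerivAt_pow 2 t).const_mul (-π)
    have h2 := ((h1.exp).div_const (2 * π)).neg
    refine h2.congr_deriv ?_
    field_simp
  have htop : Tendsto (fun t : ℝ => -(Real.exp (-π * (t:ℝ) ^ 2) / (2 * π))) atTop (𝓝 (-(0 / (2*π)))) := by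
    refine Tendsto.neg (Tendsto.div_const ?_ _)
    refine Real.tendsto_exp_atBot.comp ?_
    exact (tendsto_pow_atTop (by norm_num : (2:ℕ) ≠ 0)).const_mul_atTop_of_neg (neg_lt_zero.2 pi_pos)
  have := integral_Ioi_of_hasDerivAt_of_tendsto' hderiv
    (integrable_mul_exp_neg_mul_sq pi_pos).integrableOn htop
  rw [this]
  ring

lemma errFn_tail_le {x : ℝ} (hx : 1 ≤ x) : 1 - errFn x ≤ Real.exp (-π * x ^ 2) / π := by
  have h0 : (0:ℝ) ≤ x := by linarith
  rw [errFn_tail h0]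
  have hmono : (∫ t in Ioi x, Real.exp (-π * t ^ 2)) ≤ ∫ t in Ioi x, t * Real.exp (-π * t ^ 2) := by
    refine setIntegral_mono_on gauss_integrable.integrableOn
      (integrable_mul_exp_neg_mul_sq pi_pos).integrableOn measurableSet_Ioi ?_
    intro t ht
    have h1 : (1:ℝ) ≤ t := le_trans hx (le_of_lt ht)
    nlinarith [Real.exp_pos (-π * t ^ 2)]
  rw [integral_tail_mul x] at hmono
  have heq : Real.exp (-π * x ^ 2) / π = 2 * (Real.exp (-π * x ^ 2) / (2 * π)) := by
    field_simp
  linarith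

lemma exp_re_eq (τ z : ℂ) (s : ℝ) :
    (2 * (Real.pi : ℂ) * Complex.I * (-(τ * (s:ℂ) ^ 2 / 2) - (s:ℂ) * z)).re
      = π * s ^ 2 * τ.im + 2 * π * s * z.im := by
  simp [Complex.mul_re, Complex.mul_im, Complex.div_re, Complex.div_im, Complex.normSq_apply,
    pow_two]
  ring

lemma sign_sub_errFn_bound {y v r : ℝ} (hy : 0 < y) (hr : r ≠ 0) :
    |Real.sign r - errFn (Real.sqrt (2*y) * (r + v/y))|
      ≤ (2 * Real.exp (π * (1 + Real.sqrt (2*y) * (2*|v|/y)) ^ 2) + 1/π)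
        * Real.exp (-π * (Real.sqrt (2*y) * (r + v/y)) ^ 2) := by
  set c : ℝ := Real.sqrt (2*y) with hc_def
  have hc : 0 < c := Real.sqrt_pos.mpr (by linarith)
  set X : ℝ := c * (r + v/y) with hX_def
  set M : ℝ := 1 + c * (2*|v|/y) with hM_def
  set C : ℝ := 2 * Real.exp (π * M ^ 2) + 1/π with hC_def
  clear_value C M X c
  have hM1 : 1 ≤ M := by
    have h0 : 0 ≤ c * (2*|v|/y) := mul_nonneg hc.le (by positivity)
    linarith
  have hEpos : (0:ℝ) < Real.exp (-π * X ^ 2) := Real.exp_pos _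
  by_cases hX : |X| ≤ M
  · -- small X : trivial bound
    have h3 : |Real.sign r| ≤ 1 := by
      rcases lt_trichotomy r 0 with h | h | h
      · rw [Real.sign_of_neg h]; norm_num
      · exact absurd h hr
      · rw [Real.sign_of_pos h]; norm_num
    have h2 : |Real.sign r - errFn X| ≤ 2 := by
      calc |Real.sign r - errFn X| ≤ |Real.sign r| + |errFn X| := abs_sub _ _
        _ ≤ 2 := by linarith [abs_errFn_le_one X]
    have hXM : X ^ 2 ≤ M ^ 2 := sq_le_sq' (by linarith [(abs_le.mp hX).1]) (abs_le.mp hX).2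
    have hkey : (1:ℝ) ≤ Real.exp (π * M ^ 2) * Real.exp (-π * X ^ 2) := by
      rw [← Real.exp_add]
      refine Real.one_le_exp ?_
      nlinarith [pi_pos]
    have hpi : (0:ℝ) < 1/π := by positivity
    calc |Real.sign r - errFn X| ≤ 2 := h2
      _ ≤ 2 * (Real.exp (π * M ^ 2) * Real.exp (-π * X ^ 2)) := by nlinarith
      _ ≤ C * Real.exp (-π * X ^ 2) := by
          rw [hC_def]; nlinarith
  · push_neg at hX
    have hrv : |v| / y < |r| := by
      have hXabs : |X| = c * |r + v/y| := by rw [hX_def, abs_mul, abs_of_pos hc]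
      have h2 : c * (2*|v|/y) < c * |r + v/y| := by
        rw [← hXabs]; linarith
      have h3 : 2*|v|/y < |r + v/y| := lt_of_mul_lt_mul_left h2 hc.le
      have h4 : |r + v/y| ≤ |r| + |v/y| := abs_add_le _ _
      have h5 : |v/y| = |v|/y := by rw [abs_div, abs_of_pos hy]
      have h6 : 2*|v|/y = 2*(|v|/y) := by ring
      linarith
    have h1C : 1/π ≤ C := by
      have : (0:ℝ) < Real.exp (π * M ^ 2) := Real.exp_pos _
      rw [hC_def]; linarith
    have hvy1 : v/y ≤ |v|/y := by gcongr; exact le_abs_self v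
    have hvy2 : -(|v|/y) ≤ v/y := by rw [← neg_div]; gcongr; exact neg_abs_le v
    have hvy0 : 0 ≤ |v|/y := by positivity
    rcases lt_trichotomy r 0 with hrn | hrn | hrn
    · -- r < 0
      have hrlt : r < -(|v|/y) := by
        rw [abs_of_neg hrn] at hrv; linarith
      have hXneg : X < 0 := by
        rw [hX_def]
        exact mul_neg_of_pos_of_neg hc (by linarith)
      have hXle : X ≤ -1 := by
        have : |X| = -X := abs_of_neg hXneg
        linarith [hX.trans_le (le_refl |X|), hM1, hX.le, this ▸ hX.le]
      rw [Real.sign_of_neg hrn]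
      have h5 : errFn X = -errFn (-X) := by
        have := errFn_neg (-X); rw [neg_neg] at this; linarith
      have h6 : -1 - errFn X = -(1 - errFn (-X)) := by rw [h5]; ring
      have h7 : (1:ℝ) ≤ -X := by linarith
      have h8 : 0 ≤ 1 - errFn (-X) := by linarith [errFn_le_one (by linarith : (0:ℝ) ≤ -X)]
      rw [h6, abs_neg, abs_of_nonneg h8]
      calc 1 - errFn (-X) ≤ Real.exp (-π * (-X) ^ 2) / π := errFn_tail_le h7
        _ = (1/π) * Real.exp (-π * X ^ 2) := by rw [neg_sq]; ring
        _ ≤ C * Real.exp (-π * X ^ 2) := by nlinarith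
    · exact absurd hrn hr
    · -- r > 0
      have hrgt : |v|/y < r := by rw [abs_of_pos hrn] at hrv; linarith
      have hXpos : 0 < X := by
        rw [hX_def]
        exact mul_pos hc (by linarith)
      have hXge : 1 ≤ X := by
        have : |X| = X := abs_of_pos hXpos
        linarith [hX.le, this ▸ hX.le]
      rw [Real.sign_of_pos hrn]
      have h8 : 0 ≤ 1 - errFn X := by linarith [errFn_le_one (by linarith : (0:ℝ) ≤ X)]
      rw [abs_of_nonneg h8]
      calc 1 - errFn X ≤ Real.exp (-π * X ^ 2) / π := errFn_tail_le hXge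
        _ = (1/π) * Real.exp (-π * X ^ 2) := by ring
        _ ≤ C * Real.exp (-π * X ^ 2) := by nlinarith


set_option maxHeartbeats 1000000 in
/-- Zwegers's nonholomorphic `R`-series
`R(τ, z) = ∑_{r ∈ ℤ + 1/2} (sgn(r) - E(√(2y)(r + v/y))) (-1)^{r-1/2} q^{-r²/2} ζ^{-r}`
converges absolutely for all `(τ, z) ∈ H × ℂ`. -/
theorem R_series_summable :
    ∀ τ z : ℂ, 0 < τ.im →
      Summable (fun n : ℤ => Norm.norm (
        (((Real.sign ((n : ℝ) + 1 / 2)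
            - errFn (Real.sqrt (2 * τ.im) * (((n : ℝ) + 1 / 2) + z.im / τ.im))) : ℝ) : ℂ)
        * (-1 : ℂ) ^ n
        * Complex.exp (2 * (Real.pi : ℂ) * Complex.I *
            (-(τ * ((n : ℂ) + 1 / 2) ^ 2 / 2) - ((n : ℂ) + 1 / 2) * z)))) := by

  intro τ z hy
  set y := τ.im with hy_def
  set v := z.im with hv_def
  set C : ℝ := 2 * Real.exp (π * (1 + Real.sqrt (2*y) * (2*|v|/y)) ^ 2) + 1/π with hC_def
  set S : ℝ := (y + 2*|v|)/2 with hS_def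
  set D : ℝ := C * Real.exp (π * |v|) with hD_def
  clear_value y v
  have hCpos : 0 < C := by
    have := Real.exp_pos (π * (1 + Real.sqrt (2*y) * (2*|v|/y)) ^ 2)
    have := Real.pi_pos
    positivity
  clear_value C S D
  have hsum : Summable (fun n : ℤ => D * Real.exp (-π * (y * (n:ℝ) ^ 2 - 2*S*|(n:ℝ)|))) := by
    refine Summable.mul_left D ?_
    have := summable_pow_mul_jacobiTheta₂_term_bound S hy 0
    simpa [Int.cast_abs] using this
  refine Summable.of_nonneg_of_le (fun n => norm_nonneg _) (fun n => ?_) hsum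
  -- notation
  have h2y : (0:ℝ) < 2 * y := by linarith
  have hsq : Real.sqrt (2*y) ^ 2 = 2*y := Real.sq_sqrt h2y.le
  have hr_ne : ((n:ℝ) + 1/2) ≠ 0 := by
    intro h
    have h2 : ((2*n+1 : ℤ) : ℝ) = 0 := by push_cast; linarith
    have := Int.cast_eq_zero.mp h2
    omega
  -- compute the absolute value
  have hcast : ((n:ℂ) + 1/2) = ((((n:ℝ) + 1/2 : ℝ)):ℂ) := by push_cast; ring
  have habs : Norm.norm (
        (((Real.sign ((n : ℝ) + 1 / 2)
            - errFn (Real.sqrt (2 * y) * (((n : ℝ) + 1 / 2) + v / y))) : ℝ) : ℂ)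
        * (-1 : ℂ) ^ n
        * Complex.exp (2 * (Real.pi : ℂ) * Complex.I *
            (-(τ * ((n : ℂ) + 1 / 2) ^ 2 / 2) - ((n : ℂ) + 1 / 2) * z)))
      = |Real.sign ((n : ℝ) + 1 / 2)
            - errFn (Real.sqrt (2 * y) * (((n : ℝ) + 1 / 2) + v / y))|
        * Real.exp (π * ((n:ℝ) + 1/2) ^ 2 * y + 2 * π * ((n:ℝ) + 1/2) * v) := by
    rw [norm_mul, norm_mul, Complex.norm_real, Real.norm_eq_abs, norm_zpow, norm_neg, norm_one, one_zpow,
      mul_one, Complex.norm_exp, hcast, exp_re_eq, ← hy_def, ← hv_def]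
  rw [habs]
  -- first factor bound
  have hkey := sign_sub_errFn_bound (v := v) hy hr_ne
  have hEpos : (0:ℝ) ≤ Real.exp (π * ((n:ℝ) + 1/2) ^ 2 * y + 2 * π * ((n:ℝ) + 1/2) * v) :=
    (Real.exp_pos _).le
  calc |Real.sign ((n : ℝ) + 1 / 2)
            - errFn (Real.sqrt (2 * y) * (((n : ℝ) + 1 / 2) + v / y))|
        * Real.exp (π * ((n:ℝ) + 1/2) ^ 2 * y + 2 * π * ((n:ℝ) + 1/2) * v)
      ≤ (C * Real.exp (-π * (Real.sqrt (2*y) * (((n:ℝ) + 1/2) + v/y)) ^ 2))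
        * Real.exp (π * ((n:ℝ) + 1/2) ^ 2 * y + 2 * π * ((n:ℝ) + 1/2) * v) := by
        refine mul_le_mul_of_nonneg_right ?_ hEpos
        simpa [hC_def, mul_comm] using hkey
    _ = C * (Real.exp (-π * (Real.sqrt (2*y) * (((n:ℝ) + 1/2) + v/y)) ^ 2)
          * Real.exp (π * ((n:ℝ) + 1/2) ^ 2 * y + 2 * π * ((n:ℝ) + 1/2) * v)) := by ring
    _ ≤ C * (Real.exp (π * |v|) * Real.exp (-π * (y * (n:ℝ) ^ 2 - 2*S*|(n:ℝ)|))) := by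
        refine mul_le_mul_of_nonneg_left ?_ hCpos.le
        rw [← Real.exp_add, ← Real.exp_add]
        refine Real.exp_le_exp.mpr ?_
        have hX2 : (Real.sqrt (2*y) * (((n:ℝ) + 1/2) + v/y)) ^ 2
            = 2*y*((n:ℝ) + 1/2) ^ 2 + 4*((n:ℝ) + 1/2)*v + 2*(v^2/y) := by
          rw [mul_pow, hsq]
          field_simp
          ring
        rw [hX2, hS_def]
        have hA : -(v*(n:ℝ)) ≤ |v| * |(n:ℝ)| := by rw [← abs_mul]; exact neg_le_abs _
        have hB : -((n:ℝ)) ≤ |(n:ℝ)| := neg_le_abs _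
        have hC2 : -v ≤ |v| := neg_le_abs v
        have hD2 : (0:ℝ) ≤ v^2/y := by positivity
        have h0 : (0:ℝ) ≤ |v| + v + y*(n:ℝ) + y*|(n:ℝ)| + 2*(|v| * |(n:ℝ)| + v*(n:ℝ))
            + y/4 + 2*(v^2/y) := by
          have h1 : 0 ≤ y*(|(n:ℝ)| + (n:ℝ)) := mul_nonneg hy.le (by linarith)
          nlinarith
        nlinarith [mul_nonneg Real.pi_pos.le h0]
    _ = D * Real.exp (-π * (y * (n:ℝ) ^ 2 - 2*S*|(n:ℝ)|)) := by rw [hD_def]; ring
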